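/- Let s ∈ (0,1), κ > 0, M(κ) = ⌈π²/(4sκ²)⌉, and λ > 0. Then the lower truncation tail of the Balakrishnan integral satisfies (2 sin(πs)/π) ∫_{-∞}^{-M(κ)κ} e^{2sy}(1 + e^{2y}λ)^{-1} dy ≤ (sin(πs)/(πs)) e^{-π²/(2κ)}. -/

import Mathlib

open Real MeasureTheory

lemma integrableOn_exp_mul_Iic' {b : ℝ} (hb : 0 < b) (a : ℝ) :
    IntegrableOn (fun y : ℝ => Real.exp (b * y)) (Set.Iic a) := by
  refine integrableOn_Iic_of_intervalIntegral_norm_bounded (Real.exp (b * a) / b) a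
      (fun y => ?_) Filter.tendsto_id
      (Filter.eventually_of_mem (Filter.Iic_mem_atBot a) fun y hy => ?_)
  · exact ((Real.continuous_exp.comp (continuous_const.mul continuous_id)).intervalIntegrable _ _).1
  · have h1 : ∀ x : ℝ, ‖Real.exp (b * x)‖ = Real.exp (b * x) := fun x =>
      Real.norm_of_nonneg (Real.exp_pos _).le
    simp_rw [h1]
    rw [intervalIntegral.integral_comp_mul_left (fun x => Real.exp x) hb.ne']
    rw [integral_exp, smul_eq_mul]
    rw [inv_mul_eq_div, div_le_div_iff_of_pos_right hb, sub_le_self_iff]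
    exact (Real.exp_pos _).le

lemma integral_exp_mul_Iic' {b : ℝ} (hb : 0 < b) (a : ℝ) :
    ∫ y in Set.Iic a, Real.exp (b * y) = Real.exp (b * a) / b := by
  have hderiv : ∀ x ∈ Set.Iic a, HasDerivAt (fun y : ℝ => Real.exp (b * y) / b)
      (Real.exp (b * x)) x := by
    intro x _
    have h := (((hasDerivAt_id x).const_mul b).exp).div_const b
    exact h.congr_deriv (by simp [hb.ne'])
  have htend : Filter.Tendsto (fun y : ℝ => Real.exp (b * y) / b) Filter.atBot (nhds 0) := by
    have : Filter.Tendsto (fun y : ℝ => b * y) Filter.atBot Filter.atBot :=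
      Filter.tendsto_id.const_mul_atBot hb
    simpa using (Real.tendsto_exp_atBot.comp this).div_const b
  have := MeasureTheory.integral_Iic_of_hasDerivAt_of_tendsto'
    hderiv (integrableOn_exp_mul_Iic' hb a) htend
  simpa using this

theorem balakrishnan_lower_tail_bound
    (s : ℝ) (hs : s ∈ Set.Ioo (0 : ℝ) 1) (κ : ℝ) (hκ : 0 < κ)
    (lam : ℝ) (hlam : 0 < lam) :
    (2 * Real.sin (Real.pi * s) / Real.pi) *
        ∫ y in Set.Iic (-(((⌈Real.pi ^ 2 / (4 * s * κ ^ 2)⌉ : ℤ) : ℝ) * κ)),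
          Real.exp (2 * s * y) * (1 + Real.exp (2 * y) * lam)⁻¹
      ≤ (Real.sin (Real.pi * s) / (Real.pi * s)) * Real.exp (-Real.pi ^ 2 / (2 * κ)) := by
  obtain ⟨hs0, hs1⟩ := hs
  set M : ℝ := ((⌈Real.pi ^ 2 / (4 * s * κ ^ 2)⌉ : ℤ) : ℝ) with hM
  set a : ℝ := -(M * κ) with ha
  have hb : (0 : ℝ) < 2 * s := by linarith
  have hsin : 0 < Real.sin (Real.pi * s) :=
    Real.sin_pos_of_pos_of_lt_pi (by positivity)
      (by nlinarith [Real.pi_pos])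
  -- bound the integrand
  have hg : IntegrableOn (fun y : ℝ => Real.exp (2 * s * y)) (Set.Iic a) :=
    integrableOn_exp_mul_Iic' hb a
  have hbound : ∀ y : ℝ, Real.exp (2 * s * y) * (1 + Real.exp (2 * y) * lam)⁻¹
      ≤ Real.exp (2 * s * y) := by
    intro y
    have h1 : (0 : ℝ) < 1 + Real.exp (2 * y) * lam := by positivity
    have h2 : (1 + Real.exp (2 * y) * lam)⁻¹ ≤ 1 := by
      rw [inv_le_one_iff₀]; right; nlinarith [Real.exp_pos (2 * y), hlam]
    nlinarith [Real.exp_pos (2 * s * y), h1, inv_pos.mpr h1]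
  have hf_nonneg : ∀ y : ℝ, 0 ≤ Real.exp (2 * s * y) * (1 + Real.exp (2 * y) * lam)⁻¹ := by
    intro y; positivity
  have hf_int : IntegrableOn
      (fun y : ℝ => Real.exp (2 * s * y) * (1 + Real.exp (2 * y) * lam)⁻¹) (Set.Iic a) := by
    refine hg.mono' ?_ ?_
    · apply Continuous.aestronglyMeasurable
      have hpos : ∀ y : ℝ, (1 + Real.exp (2 * y) * lam) ≠ 0 := fun y => by positivity
      exact (Real.continuous_exp.comp (continuous_const.mul continuous_id)).mul
        ((continuous_const.add ((Real.continuous_exp.comp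
          (continuous_const.mul continuous_id)).mul continuous_const)).inv₀ hpos)
    · filter_upwards with y
      rw [Real.norm_of_nonneg (hf_nonneg y)]
      exact hbound y
  have hIle : ∫ y in Set.Iic a, Real.exp (2 * s * y) * (1 + Real.exp (2 * y) * lam)⁻¹
      ≤ ∫ y in Set.Iic a, Real.exp (2 * s * y) :=
    setIntegral_mono_on hf_int hg measurableSet_Iic fun y _ => hbound y
  have hval : ∫ y in Set.Iic a, Real.exp (2 * s * y) = Real.exp (2 * s * a) / (2 * s) :=
    integral_exp_mul_Iic' hb a
  -- exponent bound
  have hMge : Real.pi ^ 2 / (4 * s * κ ^ 2) ≤ M := Int.le_ceil _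
  have hexp : Real.exp (2 * s * a) ≤ Real.exp (-Real.pi ^ 2 / (2 * κ)) := by
    apply Real.exp_le_exp.mpr
    rw [ha]
    have h4 : (0 : ℝ) < 4 * s * κ ^ 2 := by positivity
    rw [div_le_iff₀ h4] at hMge
    have hπ : 0 < Real.pi := Real.pi_pos
    have hkey : Real.pi ^ 2 / (2 * κ) ≤ 2 * s * (M * κ) := by
      rw [div_le_iff₀ (by positivity : (0:ℝ) < 2 * κ)]
      nlinarith [hMge, hκ, hs0]
    rw [neg_div]
    linarith
  have hcoef : 0 < Real.pi := Real.pi_pos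
  calc (2 * Real.sin (Real.pi * s) / Real.pi) *
        ∫ y in Set.Iic a, Real.exp (2 * s * y) * (1 + Real.exp (2 * y) * lam)⁻¹
      ≤ (2 * Real.sin (Real.pi * s) / Real.pi) * (Real.exp (2 * s * a) / (2 * s)) := by
        rw [← hval]
        exact mul_le_mul_of_nonneg_left hIle (by positivity)
    _ = (Real.sin (Real.pi * s) / (Real.pi * s)) * Real.exp (2 * s * a) := by
        field_simp
    _ ≤ (Real.sin (Real.pi * s) / (Real.pi * s)) * Real.exp (-Real.pi ^ 2 / (2 * κ)) := by
        exact mul_le_mul_of_nonneg_left hexp (by positivity)
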